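/- Let D = (0 2 7)(1 5 3)(4 9 11)(6 10 8), Y = (0 8 1)(2 3 4)(5 10 9)(6 7 11), T = (0 4 5)(1 6 2)(3 11 10)(7 8 9) be permutations of Fin 12, and let G be the subgroup of the symmetric group on Fin 12 generated by {D, Y, T}. There exists a group isomorphism φ : G ≃ alternatingGroup (Fin 5) with φ(D) = (1 4 5), φ(Y) = (2 4 5), φ(T) = (3 4 5) (the three 3-cycles of {1,2,3,4,5}). -/

import Mathlib

/-- The vertex permutation of the icosahedron face rotation `D`:
`(0 2 7)(1 5 3)(4 9 11)(6 10 8)` on the vertices `Fin 12`. -/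
def icoD : Equiv.Perm (Fin 12) := c[0, 2, 7] * c[1, 5, 3] * c[4, 9, 11] * c[6, 10, 8]

/-- The vertex permutation of the icosahedron face rotation `Y`:
`(0 8 1)(2 3 4)(5 10 9)(6 7 11)` on the vertices `Fin 12`. -/
def icoY : Equiv.Perm (Fin 12) := c[0, 8, 1] * c[2, 3, 4] * c[5, 10, 9] * c[6, 7, 11]

/-- The vertex permutation of the icosahedron face rotation `T`:
`(0 4 5)(1 6 2)(3 11 10)(7 8 9)` on the vertices `Fin 12`. -/
def icoT : Equiv.Perm (Fin 12) := c[0, 4, 5] * c[1, 6, 2] * c[3, 11, 10] * c[7, 8, 9]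

/-- The rotation group of the icosahedron, realized as the subgroup of the symmetric
group on the twelve vertices generated by the face rotations `D`, `Y`, `T`. -/
def icoG : Subgroup (Equiv.Perm (Fin 12)) := Subgroup.closure {icoD, icoY, icoT}

theorem icoD_mem : icoD ∈ icoG := Subgroup.subset_closure (Set.mem_insert _ _)

theorem icoY_mem : icoY ∈ icoG :=
  Subgroup.subset_closure (Set.mem_insert_of_mem _ (Set.mem_insert _ _))

theorem icoT_mem : icoT ∈ icoG :=
  Subgroup.subset_closure (Set.mem_insert_of_mem _ (Set.mem_insert_of_mem _ rfl))

/- ### Auxiliary combinatorial data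

`colO v w` is the color (one of five) of the edge `{v,w}` of the icosahedron graph
(the five colors correspond to the five inscribed octahedra, i.e. the partition of the
30 edges into five invariant classes of 6), or `none` if `{v,w}` is not an edge.
`nxt v w` is the neighbor of `v` following `w` in the rotation (orientation) around `v`
if `w` is a neighbor of `v`, and `w` otherwise. -/

private def colO : Fin 12 → Fin 12 → Option (Fin 5) := ![![none, some 2, some 1, some 3, none, none, none, some 0, some 4, none, none, none],
  ![some 2, none, some 3, none, some 1, none, some 4, none, some 0, none, none, none],
  ![some 1, some 3, none, none, none, some 2, some 0, some 4, none, none, none, none],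
  ![some 3, none, none, none, none, none, none, some 2, some 1, none, some 4, some 0],
  ![none, some 1, none, none, none, none, some 2, none, some 3, some 0, none, some 4],
  ![none, none, some 2, none, none, none, some 1, some 3, none, some 4, some 0, none],
  ![none, some 4, some 0, none, some 2, some 1, none, none, none, some 3, none, none],
  ![some 0, none, some 4, some 2, none, some 3, none, none, none, none, some 1, none],
  ![some 4, some 0, none, some 1, some 3, none, none, none, none, none, none, some 2],
  ![none, none, none, none, some 0, some 4, some 3, none, none, none, some 2, some 1],
  ![none, none, none, some 4, none, some 0, none, some 1, none, some 2, none, some 3],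
  ![none, none, none, some 0, some 4, none, none, none, some 2, some 1, some 3, none]]

private def nxt : Fin 12 → Fin 12 → Fin 12 := ![![0, 8, 1, 7, 4, 5, 6, 2, 3, 9, 10, 11],
  ![2, 1, 6, 3, 8, 5, 4, 7, 0, 9, 10, 11],
  ![7, 0, 2, 3, 4, 6, 1, 5, 8, 9, 10, 11],
  ![8, 1, 2, 3, 4, 5, 6, 0, 11, 9, 7, 10],
  ![0, 6, 2, 3, 4, 5, 9, 7, 1, 11, 10, 8],
  ![0, 1, 7, 3, 4, 5, 2, 10, 8, 6, 9, 11],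
  ![0, 2, 5, 3, 1, 9, 6, 7, 8, 4, 10, 11],
  ![3, 1, 0, 10, 4, 2, 6, 7, 8, 9, 5, 11],
  ![1, 4, 2, 0, 11, 5, 6, 7, 8, 9, 10, 3],
  ![0, 1, 2, 3, 6, 10, 5, 7, 8, 9, 11, 4],
  ![0, 1, 2, 11, 4, 7, 6, 3, 8, 5, 10, 9],
  ![0, 1, 2, 8, 9, 5, 6, 7, 4, 10, 3, 11]]

private abbrev IcoP (g : Equiv.Perm (Fin 12)) (σ : Equiv.Perm (Fin 5)) : Prop :=
  ∀ v w, colO (g v) (g w) = (colO v w).map σ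

private abbrev IcoN (g : Equiv.Perm (Fin 12)) : Prop :=
  ∀ v w, nxt (g v) (g w) = g (nxt v w)

/-- The subgroup of permutations of the vertices preserving the orientation data `nxt`
and permuting the five edge colors evenly. -/
private def icoS : Subgroup (Equiv.Perm (Fin 12)) where
  carrier := {g | IcoN g ∧ ∃ σ, σ ∈ alternatingGroup (Fin 5) ∧ IcoP g σ}
  one_mem' := ⟨fun v w => rfl, 1, one_mem _, fun v w => by simp⟩
  mul_mem' := by
    rintro a b ⟨han, σa, haA, haP⟩ ⟨hbn, σb, hbA, hbP⟩
    refine ⟨fun v w => ?_, σa * σb, mul_mem haA hbA, fun v w => ?_⟩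
    · simp only [Equiv.Perm.mul_apply]
      rw [han, hbn]
    · simp only [Equiv.Perm.mul_apply]
      rw [haP, hbP, Option.map_map, Equiv.Perm.coe_mul]
  inv_mem' := by
    rintro a ⟨han, σ, haA, haP⟩
    refine ⟨fun v w => ?_, σ⁻¹, inv_mem haA, fun v w => ?_⟩
    · have h := han (a⁻¹ v) (a⁻¹ w)
      rw [(show a (a⁻¹ v) = v from Equiv.apply_symm_apply a v), (show a (a⁻¹ w) = w from Equiv.apply_symm_apply a w)] at h
      rw [h, (show a⁻¹ (a (nxt (a⁻¹ v) (a⁻¹ w))) = nxt (a⁻¹ v) (a⁻¹ w) from Equiv.symm_apply_apply a _)]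
    · have h := haP (a⁻¹ v) (a⁻¹ w)
      rw [(show a (a⁻¹ v) = v from Equiv.apply_symm_apply a v), (show a (a⁻¹ w) = w from Equiv.apply_symm_apply a w)] at h
      rw [h, Option.map_map]
      have hid : (⇑σ⁻¹ ∘ ⇑σ) = id := funext fun x => Equiv.symm_apply_apply σ x
      rw [hid, Option.map_id]
      rfl

private lemma icoS_spec {g : Equiv.Perm (Fin 12)} (hg : g ∈ icoS) :
    IcoN g ∧ ∃ σ, σ ∈ alternatingGroup (Fin 5) ∧ IcoP g σ := hg

private lemma icoP_unique {g : Equiv.Perm (Fin 12)} {σ σ' : Equiv.Perm (Fin 5)}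
    (h : IcoP g σ) (h' : IcoP g σ') : σ = σ' := by
  have key : ∀ i : Fin 5, ∃ v w : Fin 12, colO v w = some i := by decide
  refine Equiv.ext fun i => ?_
  obtain ⟨v, w, hvw⟩ := key i
  have e1 := h v w
  have e2 := h' v w
  rw [hvw] at e1 e2
  rw [e1] at e2
  simpa using e2

private lemma icoD_mem_icoS : icoD ∈ icoS :=
  ⟨by decide, c[1, 4, 5], by rw [Equiv.Perm.mem_alternatingGroup]; decide, by decide⟩

private lemma icoY_mem_icoS : icoY ∈ icoS :=
  ⟨by decide, c[2, 4, 5], by rw [Equiv.Perm.mem_alternatingGroup]; decide, by decide⟩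

private lemma icoT_mem_icoS : icoT ∈ icoS :=
  ⟨by decide, c[3, 4, 5], by rw [Equiv.Perm.mem_alternatingGroup]; decide, by decide⟩

private lemma icoG_le_icoS : icoG ≤ icoS := by
  rw [icoG, Subgroup.closure_le]
  rintro x (rfl | rfl | rfl)
  exacts [icoD_mem_icoS, icoY_mem_icoS, icoT_mem_icoS]

/-- The color permutation homomorphism. -/
private noncomputable def phi0 : icoS →* alternatingGroup (Fin 5) :=
  MonoidHom.mk' (fun g => ⟨(icoS_spec g.2).2.choose, (icoS_spec g.2).2.choose_spec.1⟩)
    (by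
      intro a b
      refine Subtype.ext (icoP_unique (icoS_spec (a * b).2).2.choose_spec.2 ?_)
      have ha := (icoS_spec a.2).2.choose_spec.2
      have hb := (icoS_spec b.2).2.choose_spec.2
      intro v w
      simp only [Subgroup.coe_mul, Equiv.Perm.mul_apply]
      rw [ha, hb, Option.map_map, Equiv.Perm.coe_mul])

private lemma phi0_spec (g : icoS) :
    IcoP g ((phi0 g : alternatingGroup (Fin 5)) : Equiv.Perm (Fin 5)) :=
  (icoS_spec g.2).2.choose_spec.2

/-- Rigidity: an orientation-preserving symmetry fixing the two endpoints of an edge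
is the identity. -/
private lemma ico_rigid {g : Equiv.Perm (Fin 12)} (hn : IcoN g)
    (h0 : g 0 = 0) (h1 : g 1 = 1) : g = 1 := by
  have h8 : g 8 = 8 := by
    have h := hn 0 1
    rw [h0, h1, (by decide : nxt (0:Fin 12) 1 = 8)] at h
    exact h.symm
  have h2 : g 2 = 2 := by
    have h := hn 1 0
    rw [h1, h0, (by decide : nxt (1:Fin 12) 0 = 2)] at h
    exact h.symm
  have h3 : g 3 = 3 := by
    have h := hn 0 8
    rw [h0, h8, (by decide : nxt (0:Fin 12) 8 = 3)] at h
    exact h.symm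
  have h6 : g 6 = 6 := by
    have h := hn 1 2
    rw [h1, h2, (by decide : nxt (1:Fin 12) 2 = 6)] at h
    exact h.symm
  have h7 : g 7 = 7 := by
    have h := hn 2 0
    rw [h2, h0, (by decide : nxt (2:Fin 12) 0 = 7)] at h
    exact h.symm
  have h4 : g 4 = 4 := by
    have h := hn 8 1
    rw [h8, h1, (by decide : nxt (8:Fin 12) 1 = 4)] at h
    exact h.symm
  have h5 : g 5 = 5 := by
    have h := hn 2 7
    rw [h2, h7, (by decide : nxt (2:Fin 12) 7 = 5)] at h
    exact h.symm
  have h11 : g 11 = 11 := by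
    have h := hn 3 8
    rw [h3, h8, (by decide : nxt (3:Fin 12) 8 = 11)] at h
    exact h.symm
  have h9 : g 9 = 9 := by
    have h := hn 4 6
    rw [h4, h6, (by decide : nxt (4:Fin 12) 6 = 9)] at h
    exact h.symm
  have h10 : g 10 = 10 := by
    have h := hn 7 3
    rw [h7, h3, (by decide : nxt (7:Fin 12) 3 = 10)] at h
    exact h.symm
  refine Equiv.ext fun x => ?_
  fin_cases x <;> simp only [Equiv.Perm.coe_one, id_eq] <;> assumption

private noncomputable def phi1 : icoG →* alternatingGroup (Fin 5) :=
  phi0.comp (Subgroup.inclusion icoG_le_icoS)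

private lemma phi1_spec (g : icoG) :
    IcoP g ((phi1 g : alternatingGroup (Fin 5)) : Equiv.Perm (Fin 5)) :=
  phi0_spec (Subgroup.inclusion icoG_le_icoS g)

private lemma phi1_inj : Function.Injective phi1 := by
  rw [injective_iff_map_eq_one]
  intro a ha
  have hP := phi1_spec a
  rw [ha] at hP
  set g := (a : Equiv.Perm (Fin 12)) with hg
  have hEq : ∀ v w : Fin 12, colO (g v) (g w) = colO v w := by
    intro v w
    have := hP v w
    simpa using this
  have hn : IcoN g := (icoS_spec (icoG_le_icoS a.2)).1
  have pin : ∀ x y : Fin 12, colO x y = some 2 → colO x (nxt x y) = some 4 →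
      colO x (nxt x (nxt x y)) = some 3 → colO x (nxt x (nxt x (nxt x y))) = some 0 →
      x = 0 ∧ y = 1 := by decide
  have e1 : nxt (g 0) (g 1) = g 8 := by rw [hn, (by decide : nxt (0:Fin 12) 1 = 8)]
  have e2 : nxt (g 0) (g 8) = g 3 := by rw [hn, (by decide : nxt (0:Fin 12) 8 = 3)]
  have e3 : nxt (g 0) (g 3) = g 7 := by rw [hn, (by decide : nxt (0:Fin 12) 3 = 7)]
  have c1 : colO (g 0) (g 1) = some 2 := by rw [hEq]; decide
  have c2 : colO (g 0) (nxt (g 0) (g 1)) = some 4 := by rw [e1, hEq]; decide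
  have c3 : colO (g 0) (nxt (g 0) (nxt (g 0) (g 1))) = some 3 := by
    rw [e1, e2, hEq]; decide
  have c4 : colO (g 0) (nxt (g 0) (nxt (g 0) (nxt (g 0) (g 1)))) = some 0 := by
    rw [e1, e2, e3, hEq]; decide
  obtain ⟨hx, hy⟩ := pin (g 0) (g 1) c1 c2 c3 c4
  exact Subtype.ext (ico_rigid hn hx hy)

/-- The ordered edges of the icosahedron graph; there are 60 of them. -/
private abbrev OEdge : Type := {p : Fin 12 × Fin 12 // (colO p.1 p.2).isSome}

private lemma card_OEdge : Nat.card OEdge = 60 := by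
  rw [Nat.card_eq_fintype_card]
  decide

private lemma card_le : Nat.card icoG ≤ 60 := by
  rw [← card_OEdge]
  have hmap : ∀ a : icoG,
      (colO ((a : Equiv.Perm (Fin 12)) 0) ((a : Equiv.Perm (Fin 12)) 1)).isSome := by
    intro a
    obtain ⟨σ, -, hPa⟩ := (icoS_spec (icoG_le_icoS a.2)).2
    rw [hPa 0 1, (by decide : colO 0 1 = some 2)]
    rfl
  refine Nat.card_le_card_of_injective
    (fun a : icoG =>
      (⟨((a : Equiv.Perm (Fin 12)) 0, (a : Equiv.Perm (Fin 12)) 1), hmap a⟩ : OEdge)) ?_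
  intro a b hab
  have h0 : (a : Equiv.Perm (Fin 12)) 0 = (b : Equiv.Perm (Fin 12)) 0 :=
    congrArg (fun p : OEdge => p.1.1) hab
  have h1 : (a : Equiv.Perm (Fin 12)) 1 = (b : Equiv.Perm (Fin 12)) 1 :=
    congrArg (fun p : OEdge => p.1.2) hab
  have hk : (b⁻¹ * a : icoG) = 1 := by
    have hn : IcoN ((b⁻¹ * a : icoG) : Equiv.Perm (Fin 12)) :=
      (icoS_spec (icoG_le_icoS (b⁻¹ * a).2)).1
    have k0 : ((b⁻¹ * a : icoG) : Equiv.Perm (Fin 12)) 0 = 0 := by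
      show (b : Equiv.Perm (Fin 12))⁻¹ ((a : Equiv.Perm (Fin 12)) 0) = 0
      rw [h0, (show (b : Equiv.Perm (Fin 12))⁻¹ ((b : Equiv.Perm (Fin 12)) 0) = 0 from Equiv.symm_apply_apply _ _)]
    have k1 : ((b⁻¹ * a : icoG) : Equiv.Perm (Fin 12)) 1 = 1 := by
      show (b : Equiv.Perm (Fin 12))⁻¹ ((a : Equiv.Perm (Fin 12)) 1) = 1
      rw [h1, (show (b : Equiv.Perm (Fin 12))⁻¹ ((b : Equiv.Perm (Fin 12)) 1) = 1 from Equiv.symm_apply_apply _ _)]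
    exact Subtype.ext (ico_rigid hn k0 k1)
  have := congrArg (fun x => b * x) hk
  simpa using this

private def icoGen : Fin 3 → Equiv.Perm (Fin 12) := ![icoD, icoY, icoT]

private def w60 : List (List (Fin 3)) := [[], [0], [1], [2], [0, 0], [0, 1], [0, 2], [1, 0], [1, 1], [1, 2], [2, 0], [2, 1], [2, 2], [0, 0, 1], [0, 0, 2], [0, 1, 1], [0, 1, 2], [0, 2, 1], [0, 2, 2], [1, 0, 0], [1, 0, 2], [1, 1, 0], [1, 1, 2], [1, 2, 0], [1, 2, 2], [2, 0, 0], [2, 0, 1], [2, 1, 0], [2, 1, 1], [2, 2, 0], [2, 2, 1], [0, 0, 1, 2], [0, 0, 2, 1], [0, 1, 1, 0], [0, 1, 1, 2], [0, 1, 2, 0], [0, 1, 2, 2], [0, 2, 1, 0], [0, 2, 1, 1], [0, 2, 2, 0], [0, 2, 2, 1], [1, 0, 0, 2], [1, 0, 2, 1], [1, 1, 0, 2], [1, 2, 0, 0], [1, 2, 0, 1], [1, 2, 2, 0], [1, 2, 2, 1], [2, 0, 0, 1], [2, 0, 1, 2], [2, 1, 0, 2], [2, 1, 1, 0], [0, 0,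 1, 2, 0], [0, 0, 2, 1, 0], [0, 1, 1, 0, 2], [0, 1, 2, 0, 0], [0, 1, 2, 0, 1], [0, 1, 2, 2, 1], [0, 2, 1, 0, 2], [1, 0, 2, 1, 1]]

private lemma icoGen_mem : ∀ i, icoGen i ∈ icoG := by
  intro i
  fin_cases i
  exacts [icoD_mem, icoY_mem, icoT_mem]

set_option maxRecDepth 100000 in
private lemma card_ge : 60 ≤ Nat.card icoG := by
  classical
  set L : List (Equiv.Perm (Fin 12)) := w60.map fun l => (l.map icoGen).prod with hL
  have hpair : (L.map fun g => (g 0, g 1)).Nodup := by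
    rw [hL, List.map_map]
    decide
  have hnd : L.Nodup := List.Nodup.of_map _ hpair
  have hsub : (↑L.toFinset : Set (Equiv.Perm (Fin 12))) ⊆ (icoG : Set _) := by
    intro g hgF
    simp only [Finset.coe_sort_coe, List.coe_toFinset, Set.mem_setOf_eq] at hgF
    rw [List.mem_iff_getElem?] at hgF
    have hgL : g ∈ L := by simpa [List.mem_iff_getElem?] using hgF
    rw [hL] at hgL
    obtain ⟨l, -, rfl⟩ := List.mem_map.1 hgL
    exact Subgroup.list_prod_mem _ fun x hx => by
      obtain ⟨i, -, rfl⟩ := List.mem_map.1 hx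
      exact icoGen_mem i
  have hlen : L.length = 60 := by rw [hL]; decide
  have hcard : Nat.card icoG = (icoG : Set (Equiv.Perm (Fin 12))).ncard := by
    rw [← Nat.card_coe_set_eq]
    rfl
  calc (60 : ℕ) = L.toFinset.card := by rw [List.toFinset_card_of_nodup hnd, hlen]
    _ = (↑L.toFinset : Set (Equiv.Perm (Fin 12))).ncard := (Set.ncard_coe_finset _).symm
    _ ≤ (icoG : Set (Equiv.Perm (Fin 12))).ncard := Set.ncard_le_ncard hsub (Set.toFinite _)
    _ = Nat.card icoG := hcard.symm

private lemma card_A5 : Nat.card (alternatingGroup (Fin 5)) = 60 := by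
  have h := two_mul_card_alternatingGroup (α := Fin 5)
  rw [Nat.card_eq_fintype_card]
  simp only [Fintype.card_perm, Fintype.card_fin] at h
  have h2 : Nat.factorial 5 = 120 := rfl
  rw [h2] at h
  omega

/-- There is a group isomorphism `φ` from the icosahedron rotation group `G`
(generated by the face rotations `D`, `Y`, `T` acting on the twelve vertices
`Fin 12`) to the alternating group `A₅` on `{1,2,3,4,5}` (identified with `Fin 5`)
sending `D ↦ (1 4 5)`, `Y ↦ (2 4 5)`, `T ↦ (3 4 5)`. -/
theorem icosahedron_rotation_group_iso_alternatingGroup :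
    ∃ φ : icoG ≃* alternatingGroup (Fin 5),
      ((φ ⟨icoD, icoD_mem⟩ : alternatingGroup (Fin 5)) : Equiv.Perm (Fin 5)) = c[1, 4, 5] ∧
      ((φ ⟨icoY, icoY_mem⟩ : alternatingGroup (Fin 5)) : Equiv.Perm (Fin 5)) = c[2, 4, 5] ∧
      ((φ ⟨icoT, icoT_mem⟩ : alternatingGroup (Fin 5)) : Equiv.Perm (Fin 5)) = c[3, 4, 5] := by
  have hcard : Nat.card icoG = Nat.card (alternatingGroup (Fin 5)) := by
    rw [card_A5]
    exact le_antisymm card_le card_ge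
  have hbij : Function.Bijective phi1 :=
    (Nat.bijective_iff_injective_and_card phi1).2 ⟨phi1_inj, hcard⟩
  refine ⟨MulEquiv.ofBijective phi1 hbij, ?_, ?_, ?_⟩
  · exact icoP_unique (phi1_spec ⟨icoD, icoD_mem⟩) (by decide)
  · exact icoP_unique (phi1_spec ⟨icoY, icoY_mem⟩) (by decide)
  · exact icoP_unique (phi1_spec ⟨icoT, icoT_mem⟩) (by decide)
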